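/- Let m ≥ 3 be an integer and let E(a,b) = ∫₀¹ e^{−i(ax + b x^m)} dx be the Fourier extension of the constant function 1 on the curve {(x,x^m) : x ∈ [0,1]} (with respect to the measure dx). Then ∫_{ℝ²} |E(a,b)|^{m+1} da db = ∞; in particular the adjoint restriction estimate ‖E‖_{L^{p'}(ℝ²)} ≤ C ‖1‖_{L^{q'}} fails at the endpoint p' = m+1. -/

import Mathlib

open MeasureTheory Set
open scoped ENNReal

section AuxRestriction

set_option maxHeartbeats 1000000
set_option linter.unusedVariables false
set_option linter.deprecated false

open intervalIntegral Complex

lemma exp_deriv (m : ℕ) (a b : ℝ) (x : ℝ) (hm : 1 ≤ m) :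
    HasDerivAt (fun x : ℝ => Complex.exp (-Complex.I * ((a : ℂ) * (x : ℂ) + (b : ℂ) * (x : ℂ) ^ m)))
      (Complex.exp (-Complex.I * ((a : ℂ) * (x : ℂ) + (b : ℂ) * (x : ℂ) ^ m)) *
        (-Complex.I * (((a + m * b * x ^ (m - 1) : ℝ)) : ℂ))) x := by
  have hφ : HasDerivAt (fun x : ℝ => a * x + b * x ^ m) (a + m * b * x ^ (m - 1)) x := by
    have h1 : HasDerivAt (fun x : ℝ => a * x) a x := by
      simpa using (hasDerivAt_id x).const_mul a
    have h2 : HasDerivAt (fun x : ℝ => b * x ^ m) (b * (m * x ^ (m - 1))) x :=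
      (hasDerivAt_pow m x).const_mul b
    exact (h1.add h2).congr_deriv (by ring)
  have h := ((hφ.ofReal_comp.const_mul (-Complex.I))).cexp
  convert h using 2 <;> push_cast <;> ring

lemma norm_exp_eq_one (m : ℕ) (a b : ℝ) (x : ℝ) :
    ‖Complex.exp (-Complex.I * ((a : ℂ) * (x : ℂ) + (b : ℂ) * (x : ℂ) ^ m))‖ = 1 := by
  have h : (-Complex.I * ((a : ℂ) * (x : ℂ) + (b : ℂ) * (x : ℂ) ^ m)) =
      ((-(a * x + b * x ^ m) : ℝ) : ℂ) * Complex.I := by push_cast; ring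
  rw [h, Complex.norm_exp]
  simp only [Complex.mul_I_re, Complex.ofReal_im, neg_zero, Real.exp_zero]

lemma tail_bound (m : ℕ) (hm : 3 ≤ m) (a b x₀ : ℝ) (ha : 0 < a) (hb : 0 < b)
    (hx0 : 0 < x₀) (hx1 : x₀ ≤ 1) :
    ‖∫ x in x₀..1, Complex.exp (-Complex.I * ((a : ℂ) * (x : ℂ) + (b : ℂ) * (x : ℂ) ^ m))‖ ≤
      2 / (a + m * b * x₀ ^ (m - 1)) := by
  set Λ : ℝ → ℝ := fun x => a + m * b * x ^ (m - 1) with hΛdef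
  set Λ' : ℝ → ℝ := fun x => m * b * (((m - 1 : ℕ) : ℝ) * x ^ (m - 2)) with hΛ'def
  have hm1 : 1 ≤ m := by omega
  have hicc : uIcc x₀ 1 = Icc x₀ 1 := uIcc_of_le hx1
  have hΛpos : ∀ x ∈ Icc x₀ 1, 0 < Λ x := by
    intro x hx
    have hx0' : 0 < x := lt_of_lt_of_le hx0 hx.1
    have : 0 ≤ (m : ℝ) * b * x ^ (m - 1) := by positivity
    simp only [hΛdef]; linarith
  have hΛ'nonneg : ∀ x ∈ Icc x₀ 1, 0 ≤ Λ' x := by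
    intro x hx
    have hx0' : (0:ℝ) ≤ x := (lt_of_lt_of_le hx0 hx.1).le
    simp only [hΛ'def]; positivity
  have hΛderiv : ∀ x, HasDerivAt Λ (Λ' x) x := by
    intro x
    have h2 : HasDerivAt (fun x : ℝ => x ^ (m - 1)) (((m - 1 : ℕ) : ℝ) * x ^ (m - 2)) x := by
      have := hasDerivAt_pow (m - 1) x
      rwa [show m - 1 - 1 = m - 2 by omega] at this
    exact ((h2.const_mul _).const_add _)
  set f : ℝ → ℂ := fun x => Complex.exp (-Complex.I * ((a : ℂ) * (x : ℂ) + (b : ℂ) * (x : ℂ) ^ m)) with hfdef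
  set v : ℝ → ℂ := fun x => Complex.I * ((Λ x : ℝ) : ℂ)⁻¹ with hvdef
  set v' : ℝ → ℂ := fun x => Complex.I * ((-(Λ' x) / (Λ x) ^ 2 : ℝ) : ℂ) with hv'def
  set u' : ℝ → ℂ := fun x => f x * (-Complex.I * ((Λ x : ℝ) : ℂ)) with hu'def
  have hu : ∀ x ∈ uIcc x₀ 1, HasDerivAt f (u' x) x := fun x _ => exp_deriv m a b x hm1
  have hv : ∀ x ∈ uIcc x₀ 1, HasDerivAt v (v' x) x := by
    intro x hx
    rw [hicc] at hx
    have hne : Λ x ≠ 0 := (hΛpos x hx).ne'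
    have := (((hΛderiv x).inv hne).ofReal_comp).const_mul Complex.I
    simpa [hvdef, hv'def] using this
  have hfcont : Continuous f := by fun_prop
  have hΛcont : Continuous Λ := by fun_prop
  have hΛ'cont : Continuous Λ' := by fun_prop
  have hvcont : ContinuousOn v (uIcc x₀ 1) := by
    rw [hicc]
    apply ContinuousOn.mul continuousOn_const
    apply ContinuousOn.inv₀
    · fun_prop
    · intro x hx
      exact_mod_cast Complex.ofReal_ne_zero.mpr (hΛpos x hx).ne'
  have hv'cont : ContinuousOn v' (uIcc x₀ 1) := by
    rw [hicc]
    apply ContinuousOn.mul continuousOn_const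
    apply ContinuousOn.comp Complex.continuous_ofReal.continuousOn _ (mapsTo_univ _ _)
    apply ContinuousOn.div (by fun_prop) (by fun_prop)
    intro x hx; exact pow_ne_zero 2 (hΛpos x hx).ne'
  have hu'cont : Continuous u' := by fun_prop
  have hu'int : IntervalIntegrable u' volume x₀ 1 := hu'cont.intervalIntegrable _ _
  have hv'int : IntervalIntegrable v' volume x₀ 1 := hv'cont.intervalIntegrable
  have huv'int : IntervalIntegrable (fun x => f x * v' x) volume x₀ 1 :=
    ((hfcont.continuousOn).mul hv'cont).intervalIntegrable
  have hu'vint : IntervalIntegrable (fun x => u' x * v x) volume x₀ 1 :=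
    (hu'cont.continuousOn.mul hvcont).intervalIntegrable
  have ibp := integral_deriv_mul_eq_sub hu hv hu'int hv'int
  have hcongr : EqOn f (fun x => u' x * v x) (uIcc x₀ 1) := by
    intro x hx
    rw [hicc] at hx
    have hne : ((Λ x : ℝ) : ℂ) ≠ 0 := Complex.ofReal_ne_zero.mpr (hΛpos x hx).ne'
    have h1 : (-Complex.I * ((Λ x : ℝ) : ℂ)) * (Complex.I * ((Λ x : ℝ) : ℂ)⁻¹) = 1 := by
      rw [mul_mul_mul_comm, mul_inv_cancel₀ hne, neg_mul, Complex.I_mul_I, neg_neg, one_mul]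
    simp only [hu'def, hvdef]
    rw [mul_assoc, h1, mul_one]
  have key : ∫ x in x₀..1, f x = (f 1 * v 1 - f x₀ * v x₀) - ∫ x in x₀..1, f x * v' x := by
    calc ∫ x in x₀..1, f x = ∫ x in x₀..1, u' x * v x := integral_congr hcongr
      _ = (∫ x in x₀..1, (u' x * v x + f x * v' x)) - ∫ x in x₀..1, f x * v' x := by
          rw [integral_add hu'vint huv'int]; ring
      _ = (f 1 * v 1 - f x₀ * v x₀) - ∫ x in x₀..1, f x * v' x := by rw [ibp]
  -- FTC for Λ'/Λ²
  have hFTC : ∫ x in x₀..1, Λ' x / (Λ x) ^ 2 = (Λ x₀)⁻¹ - (Λ 1)⁻¹ := by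
    have hF : ∀ x ∈ uIcc x₀ 1, HasDerivAt (fun y => -(Λ y)⁻¹) (Λ' x / (Λ x) ^ 2) x := by
      intro x hx
      rw [hicc] at hx
      have hne : Λ x ≠ 0 := (hΛpos x hx).ne'
      have := ((hΛderiv x).inv hne).neg
      exact this.congr_deriv (by ring)
    have hint : IntervalIntegrable (fun x => Λ' x / (Λ x) ^ 2) volume x₀ 1 := by
      apply ContinuousOn.intervalIntegrable
      rw [hicc]
      apply ContinuousOn.div (by fun_prop) (by fun_prop)
      intro x hx; exact pow_ne_zero 2 (hΛpos x hx).ne'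
    have := integral_eq_sub_of_hasDerivAt hF hint
    rw [this]; ring
  have hnormfv' : EqOn (fun x => ‖f x * v' x‖) (fun x => Λ' x / (Λ x) ^ 2) (uIcc x₀ 1) := by
    intro x hx
    rw [hicc] at hx
    simp only [hv'def, norm_mul, Complex.norm_I, Complex.norm_real, Real.norm_eq_abs]
    rw [show ‖f x‖ = 1 from norm_exp_eq_one m a b x, abs_div, abs_neg,
      _root_.abs_of_nonneg (hΛ'nonneg x hx), _root_.abs_of_nonneg (sq_nonneg (Λ x))]
    ring
  have hbound2 : ‖∫ x in x₀..1, f x * v' x‖ ≤ (Λ x₀)⁻¹ - (Λ 1)⁻¹ := by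
    rw [← hFTC, ← integral_congr hnormfv']
    exact intervalIntegral.norm_integral_le_integral_norm hx1
  have hnormfv : ∀ x ∈ Icc x₀ 1, ‖f x * v x‖ = (Λ x)⁻¹ := by
    intro x hx
    simp only [hvdef, norm_mul, Complex.norm_I, norm_inv, Complex.norm_real, Real.norm_eq_abs]
    rw [show ‖f x‖ = 1 from norm_exp_eq_one m a b x,
      _root_.abs_of_pos (hΛpos x hx)]
    ring
  have hx₀mem : x₀ ∈ Icc x₀ 1 := ⟨le_refl _, hx1⟩
  have h1mem : (1:ℝ) ∈ Icc x₀ 1 := ⟨hx1, le_refl _⟩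
  calc ‖∫ x in x₀..1, f x‖
      = ‖(f 1 * v 1 - f x₀ * v x₀) - ∫ x in x₀..1, f x * v' x‖ := by rw [key]
    _ ≤ ‖f 1 * v 1‖ + ‖f x₀ * v x₀‖ + ‖∫ x in x₀..1, f x * v' x‖ := by
        refine le_trans (norm_sub_le _ _) ?_
        have := norm_sub_le (f 1 * v 1) (f x₀ * v x₀)
        linarith
    _ ≤ (Λ 1)⁻¹ + (Λ x₀)⁻¹ + ((Λ x₀)⁻¹ - (Λ 1)⁻¹) := by
        rw [hnormfv 1 h1mem, hnormfv x₀ hx₀mem]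
        linarith [hbound2]
    _ = 2 / Λ x₀ := by rw [div_eq_mul_inv]; ring

lemma exp_re_eq (m : ℕ) (a b : ℝ) (x : ℝ) :
    (Complex.exp (-Complex.I * ((a : ℂ) * (x : ℂ) + (b : ℂ) * (x : ℂ) ^ m))).re =
      Real.cos (a * x + b * x ^ m) := by
  have h : (-Complex.I * ((a : ℂ) * (x : ℂ) + (b : ℂ) * (x : ℂ) ^ m)) =
      ((-(a * x + b * x ^ m) : ℝ) : ℂ) * Complex.I := by push_cast; ring
  rw [h, Complex.exp_ofReal_mul_I_re, Real.cos_neg]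

lemma main_term (m : ℕ) (hm : 3 ≤ m) (a b x₀ : ℝ) (ha : 0 < a) (hb : 0 < b)
    (hx0 : 0 < x₀) (hbx : b * x₀ ^ m = 6/5) (hax : a * x₀ ≤ 1/20) :
    x₀ * (1 - 1/1200 - 36/175) ≤ ∫ x in (0:ℝ)..x₀, Real.cos (a * x + b * x ^ m) := by
  have hlow : ∫ x in (0:ℝ)..x₀, (1 - a^2 * x^2 - b^2 * x^(2*m)) ≤
      ∫ x in (0:ℝ)..x₀, Real.cos (a * x + b * x ^ m) := by
    apply integral_mono_on hx0.le
    · apply Continuous.intervalIntegrable; fun_prop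
    · apply Continuous.intervalIntegrable; fun_prop
    · intro x hx
      have h1 : 1 - (a * x + b * x ^ m)^2 / 2 ≤ Real.cos (a * x + b * x ^ m) :=
        Real.one_sub_sq_div_two_le_cos
      have hxm : x^(2*m) = (x^m)^2 := by rw [mul_comm, pow_mul]
      have h2 : (a * x + b * x ^ m)^2 / 2 ≤ a^2 * x^2 + b^2 * x^(2*m) := by
        rw [hxm]
        nlinarith [sq_nonneg (a * x - b * x ^ m)]
      linarith
  have hcomp : ∫ x in (0:ℝ)..x₀, (1 - a^2 * x^2 - b^2 * x^(2*m)) =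
      x₀ - a^2 * (x₀^3 / 3) - b^2 * (x₀^(2*m+1) / (2*(m:ℝ)+1)) := by
    have i1 : IntervalIntegrable (fun x : ℝ => a^2 * x^2) volume 0 x₀ := by
      apply Continuous.intervalIntegrable; fun_prop
    have i2 : IntervalIntegrable (fun x : ℝ => b^2 * x^(2*m)) volume 0 x₀ := by
      apply Continuous.intervalIntegrable; fun_prop
    have i0 : IntervalIntegrable (fun _ : ℝ => (1:ℝ)) volume 0 x₀ :=
      intervalIntegrable_const
    rw [integral_sub (i0.sub i1) i2, integral_sub i0 i1, intervalIntegral.integral_const,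
      intervalIntegral.integral_const_mul, intervalIntegral.integral_const_mul, integral_pow, integral_pow]
    push_cast
    simp only [smul_eq_mul, mul_one]
    ring
  rw [hcomp] at hlow
  refine le_trans ?_ hlow
  have e2 : b^2 * x₀^(2*m+1) = (b * x₀^m)^2 * x₀ := by
    rw [show x₀^(2*m+1) = (x₀^m)^2 * x₀ from by rw [pow_succ, mul_comm 2 m, pow_mul]]; ring
  have hA : a^2 * (x₀^3/3) ≤ x₀/1200 := by
    have h := mul_le_mul hax hax (by positivity) (by norm_num)
    nlinarith [hx0]
  have hB : b^2 * (x₀^(2*m+1) / (2*(m:ℝ)+1)) ≤ 36/175 * x₀ := by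
    have hc : (7:ℝ) ≤ 2*(m:ℝ)+1 := by
      have : (3:ℝ) ≤ (m:ℝ) := by exact_mod_cast hm
      linarith
    have hval : b^2 * x₀^(2*m+1) = 36/25 * x₀ := by rw [e2, hbx]; norm_num
    calc b^2 * (x₀^(2*m+1) / (2*(m:ℝ)+1)) = (b^2 * x₀^(2*m+1)) / (2*(m:ℝ)+1) := by ring
      _ = (36/25 * x₀) / (2*(m:ℝ)+1) := by rw [hval]
      _ ≤ (36/25 * x₀) / 7 := by gcongr
      _ = 36/175 * x₀ := by ring
  linarith

lemma key_lower (m : ℕ) (hm : 3 ≤ m) (a b x₀ : ℝ) (ha : 0 < a) (hb : 0 < b)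
    (hx0 : 0 < x₀) (hx1 : x₀ ≤ 1) (hbx : b * x₀ ^ m = 6/5) (hax : a * x₀ ≤ 1/20) :
    x₀ / 5 ≤
      ‖∫ x in Ioc (0:ℝ) 1,
        Complex.exp (-Complex.I * ((a : ℂ) * (x : ℂ) + (b : ℂ) * (x : ℂ) ^ m))‖ := by
  set f : ℝ → ℂ := fun x => Complex.exp (-Complex.I * ((a : ℂ) * (x : ℂ) + (b : ℂ) * (x : ℂ) ^ m))
    with hfdef
  have hfcont : Continuous f := by fun_prop
  have hIoc : ∫ x in Ioc (0:ℝ) 1, f x = ∫ x in (0:ℝ)..1, f x :=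
    (integral_of_le zero_le_one).symm
  have hsplit : ∫ x in (0:ℝ)..1, f x = (∫ x in (0:ℝ)..x₀, f x) + ∫ x in x₀..1, f x :=
    (integral_add_adjacent_intervals (hfcont.intervalIntegrable _ _)
      (hfcont.intervalIntegrable _ _)).symm
  -- real part of the main piece
  have hre : ∫ x in (0:ℝ)..x₀, Real.cos (a * x + b * x ^ m) = (∫ x in (0:ℝ)..x₀, f x).re := by
    rw [integral_of_le hx0.le, integral_of_le hx0.le]
    have hint : IntegrableOn f (Ioc (0:ℝ) x₀) volume :=
      (hfcont.integrableOn_Ioc)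
    have h := integral_re hint
    simp only [RCLike.re_to_complex] at h
    rw [← h]
    apply setIntegral_congr_fun measurableSet_Ioc
    intro x _
    exact (exp_re_eq m a b x).symm
  have hmain : x₀ * (1 - 1/1200 - 36/175) ≤ ‖∫ x in (0:ℝ)..x₀, f x‖ := by
    refine le_trans (main_term m hm a b x₀ ha hb hx0 hbx hax) ?_
    rw [hre]
    exact (Complex.re_le_norm _).trans le_rfl
  -- tail
  have hΛ : (18/5) / x₀ ≤ a + m * b * x₀ ^ (m - 1) := by
    have hbx' : b * x₀ ^ (m - 1) = (6/5) / x₀ := by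
      have : x₀ ^ m = x₀ ^ (m - 1) * x₀ := by
        rw [← pow_succ]; congr 1; omega
      rw [this] at hbx
      field_simp at hbx ⊢
      linarith [hbx]
    have hmr : (3:ℝ) ≤ (m:ℝ) := by exact_mod_cast hm
    have hpos : 0 < (6/5) / x₀ := by positivity
    have : (3:ℝ) * ((6/5)/x₀) ≤ (m:ℝ) * (b * x₀ ^ (m-1)) := by
      rw [hbx']
      apply mul_le_mul_of_nonneg_right hmr hpos.le
    have h18 : (18/5)/x₀ = 3 * ((6/5)/x₀) := by ring
    rw [h18]
    calc 3 * ((6/5)/x₀) ≤ (m:ℝ) * (b * x₀ ^ (m-1)) := this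
      _ = (m:ℝ) * b * x₀ ^ (m-1) := by ring
      _ ≤ a + m * b * x₀ ^ (m-1) := by linarith
  have htail : ‖∫ x in x₀..1, f x‖ ≤ (5/9) * x₀ := by
    refine le_trans (tail_bound m hm a b x₀ ha hb hx0 hx1) ?_
    have hpos : (0:ℝ) < (18/5)/x₀ := by positivity
    calc (2:ℝ) / (a + m * b * x₀ ^ (m - 1)) ≤ 2 / ((18/5)/x₀) := by
          apply div_le_div_of_nonneg_left (by norm_num) hpos hΛ
      _ = (5/9) * x₀ := by field_simp; ring
  -- combine
  rw [hIoc, hsplit]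
  have htri : ‖∫ x in (0:ℝ)..x₀, f x‖ - ‖∫ x in x₀..1, f x‖ ≤
      ‖(∫ x in (0:ℝ)..x₀, f x) + ∫ x in x₀..1, f x‖ := by
    have := norm_sub_le ((∫ x in (0:ℝ)..x₀, f x) + ∫ x in x₀..1, f x) (∫ x in x₀..1, f x)
    simp only [add_sub_cancel_right] at this
    linarith
  have : x₀ / 5 ≤ x₀ * (1 - 1/1200 - 36/175) - (5/9) * x₀ := by nlinarith [hx0]
  linarith

/-- Failure of the adjoint restriction estimate at the endpoint `p' = m+1` for the curve
`{(x, x^m) : x ∈ [0,1]}`: the `L^{m+1}(ℝ²)` norm of the Fourier extension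
`E(a,b) = ∫₀¹ e^{-i(ax + b x^m)} dx` of the constant function `1` diverges. -/
theorem statement3 (m : ℕ) (hm : 3 ≤ m) :
    ∫⁻ p : ℝ × ℝ, ENNReal.ofReal
        (‖∫ x in Ioc (0:ℝ) 1,
            Complex.exp (-Complex.I * ((p.1 : ℂ) * (x : ℂ) + (p.2 : ℂ) * (x : ℂ) ^ m))‖ ^
          ((m : ℝ) + 1)) = ⊤ := by
  set F : ℝ × ℝ → ℝ≥0∞ := fun p => ENNReal.ofReal
        (‖∫ x in Ioc (0:ℝ) 1,
            Complex.exp (-Complex.I * ((p.1 : ℂ) * (x : ℂ) + (p.2 : ℂ) * (x : ℂ) ^ m))‖ ^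
          ((m : ℝ) + 1)) with hFdef
  have hm0 : (m:ℝ) ≠ 0 := by positivity
  set S : ℕ → Set (ℝ × ℝ) := fun j =>
    Ioc (0:ℝ) ((2:ℝ)^(j+1)/25) ×ˢ Ioc (((2:ℝ)^(j+1))^m) (2*((2:ℝ)^(j+1))^m) with hSdef
  have hSmeas : ∀ j, MeasurableSet (S j) := fun j =>
    measurableSet_Ioc.prod measurableSet_Ioc
  have hdisj : Pairwise (Function.onFun Disjoint S) := by
    have hkey : ∀ i j : ℕ, i < j → 2*((2:ℝ)^(i+1))^m ≤ ((2:ℝ)^(j+1))^m := by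
      intro i j hij
      rw [← pow_mul, ← pow_mul, show 2*((2:ℝ)^((i+1)*m)) = 2^((i+1)*m+1) from by
        rw [pow_succ]; ring]
      apply pow_le_pow_right₀ (by norm_num)
      nlinarith [hm, hij]
    intro i j hij
    rcases lt_or_gt_of_ne hij with h | h
    all_goals {
      apply Set.disjoint_left.mpr
      rintro ⟨a, b⟩ hp1 hp2
      have h1 := hp1.2
      have h2 := hp2.2
      simp only [mem_Ioc] at h1 h2
      first
      | (have := hkey i j h; linarith [h1.2, h2.1])
      | (have := hkey j i h; linarith [h1.1, h2.2])
    }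
  -- per-block lower bound
  have hblock : ∀ j : ℕ, ENNReal.ofReal (((10:ℝ)^(m+1)*25)⁻¹) ≤ ∫⁻ p in S j, F p := by
    intro j
    set A : ℝ := (2:ℝ)^(j+1) with hAdef
    have hA2 : (2:ℝ) ≤ A := by
      rw [hAdef]
      calc (2:ℝ) = 2^1 := (pow_one 2).symm
        _ ≤ 2^(j+1) := pow_le_pow_right₀ (by norm_num) (by omega)
    have hA0 : (0:ℝ) < A := by linarith
    have h2m : (8:ℝ) ≤ 2^m := by
      calc (8:ℝ) = 2^3 := by norm_num
        _ ≤ 2^m := pow_le_pow_right₀ (by norm_num) hm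
    have hAm8 : (8:ℝ) ≤ A^m := by
      calc (8:ℝ) ≤ 2^m := h2m
        _ ≤ A^m := pow_le_pow_left₀ (by norm_num) hA2 m
    have hpt : ∀ p ∈ S j, ENNReal.ofReal ((1/(10*A))^(m+1)) ≤ F p := by
      rintro ⟨a, b⟩ hp
      simp only [hSdef, mem_prod, mem_Ioc] at hp
      obtain ⟨⟨ha0, ha1⟩, ⟨hb1, hb2⟩⟩ := hp
      rw [← hAdef] at ha1 hb1 hb2
      have hb0 : (0:ℝ) < b := lt_trans (by positivity) hb1
      set x₀ : ℝ := (6/5/b) ^ ((m:ℝ)⁻¹) with hx₀def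
      have hbase : (0:ℝ) < 6/5/b := by positivity
      have hx0 : 0 < x₀ := Real.rpow_pos_of_pos hbase _
      have hx₀m : x₀ ^ m = 6/5/b := by
        rw [hx₀def, ← Real.rpow_natCast ((6/5/b) ^ ((m:ℝ)⁻¹)) m, ← Real.rpow_mul hbase.le,
          inv_mul_cancel₀ hm0, Real.rpow_one]
      have hbx : b * x₀ ^ m = 6/5 := by
        rw [hx₀m]; field_simp
      have hx1 : x₀ ≤ 1 := by
        apply Real.rpow_le_one hbase.le _ (by positivity)
        rw [div_le_one hb0]
        linarith [hAm8, hb1]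
      -- upper bound on x₀
      have hAmx : (A^m : ℝ) ^ ((m:ℝ)⁻¹) = A := by
        rw [← Real.rpow_natCast A m, ← Real.rpow_mul hA0.le, mul_inv_cancel₀ hm0, Real.rpow_one]
      have hx₀up : x₀ ≤ (6/5) / A := by
        have h1 : (6/5/b) ≤ 6/5/A^m := by
          apply div_le_div_of_nonneg_left (by norm_num) (by positivity) hb1.le
        calc x₀ ≤ (6/5/A^m) ^ ((m:ℝ)⁻¹) :=
              Real.rpow_le_rpow hbase.le h1 (by positivity)
          _ = (6/5 : ℝ) ^ ((m:ℝ)⁻¹) / (A^m) ^ ((m:ℝ)⁻¹) :=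
              Real.div_rpow (by norm_num : (0:ℝ) ≤ 6/5) (by positivity : (0:ℝ) ≤ A^m) _
          _ = (6/5 : ℝ) ^ ((m:ℝ)⁻¹) / A := by rw [hAmx]
          _ ≤ (6/5) / A := by
              gcongr
              calc (6/5 : ℝ) ^ ((m:ℝ)⁻¹) ≤ (6/5 : ℝ) ^ (1:ℝ) := by
                    apply Real.rpow_le_rpow_of_exponent_le (by norm_num)
                    have h1m : (1:ℝ) ≤ (m:ℝ) := by exact_mod_cast (by omega : 1 ≤ m)
                    rw [inv_le_one_iff₀]
                    right; exact h1m
                _ = 6/5 := Real.rpow_one _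
      have hax : a * x₀ ≤ 1/20 := by
        have := mul_le_mul ha1 hx₀up hx0.le (by positivity)
        calc a * x₀ ≤ A/25 * (6/5/A) := this
          _ = 6/125 := by field_simp; ring
          _ ≤ 1/20 := by norm_num
      -- lower bound on x₀
      have hx₀low : 1/(2*A) ≤ x₀ := by
        apply le_of_pow_le_pow_left₀ (by omega : m ≠ 0) hx0.le
        rw [hx₀m]
        have e1 : (1/(2*A))^m = 1/(2^m * A^m) := by
          rw [div_pow, one_pow, mul_pow]
        rw [e1]
        have h1 : 1/((2:ℝ)^m * A^m) ≤ (3/5)/A^m := by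
          rw [div_le_div_iff₀ (by positivity) (by positivity)]
          nlinarith [pow_pos hA0 m, h2m]
        have h2 : (3/5:ℝ)/A^m ≤ 6/5/b := by
          rw [div_le_div_iff₀ (by positivity) hb0]
          nlinarith [pow_pos hA0 m]
        linarith
      -- conclude
      have hE := key_lower m hm a b x₀ ha0 hb0 hx0 hx1 hbx hax
      have hlow : 1/(10*A) ≤ x₀/5 := by
        have he : (1/(2*A))/5 = 1/(10*A) := by ring
        linarith [hx₀low]
      rw [hFdef]
      apply ENNReal.ofReal_le_ofReal
      have hnorm : 1/(10*A) ≤ ‖∫ x in Ioc (0:ℝ) 1,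
          Complex.exp (-Complex.I * ((a : ℂ) * (x : ℂ) + (b : ℂ) * (x : ℂ) ^ m))‖ :=
        le_trans hlow hE
      calc (1/(10*A))^(m+1) = (1/(10*A)) ^ (((m+1 : ℕ) : ℝ)) := (Real.rpow_natCast _ _).symm
        _ = (1/(10*A)) ^ ((m:ℝ)+1) := by push_cast; ring_nf
        _ ≤ _ := Real.rpow_le_rpow (by positivity) hnorm (by positivity)
    have hvol : volume (S j) = ENNReal.ofReal (A/25) * ENNReal.ofReal (A^m) := by
      rw [hSdef]
      rw [show (volume : Measure (ℝ × ℝ)) = (volume : Measure ℝ).prod volume from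
        Measure.volume_eq_prod ℝ ℝ, Measure.prod_prod, Real.volume_Ioc, Real.volume_Ioc]
      congr 1
      · congr 1; ring
      · congr 1; ring
    calc ENNReal.ofReal (((10:ℝ)^(m+1)*25)⁻¹)
        = ENNReal.ofReal ((1/(10*A))^(m+1)) * (ENNReal.ofReal (A/25) * ENNReal.ofReal (A^m)) := by
          rw [← ENNReal.ofReal_mul (by positivity), ← ENNReal.ofReal_mul (by positivity)]
          congr 1
          have h1 : (1/(10*A))^(m+1) = 1/((10:ℝ)^(m+1)*A^(m+1)) := by
            rw [div_pow, one_pow, mul_pow]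
          have h2 : A/25*A^m = A^(m+1)/25 := by rw [pow_succ]; ring
          rw [h1, h2]
          have hAne : A^(m+1) ≠ 0 := by positivity
          field_simp
      _ = ENNReal.ofReal ((1/(10*A))^(m+1)) * volume (S j) := by rw [hvol]
      _ = ∫⁻ _ in S j, ENNReal.ofReal ((1/(10*A))^(m+1)) := (setLIntegral_const _ _).symm
      _ ≤ ∫⁻ p in S j, F p := by
          apply lintegral_mono_ae
          exact (ae_restrict_iff' (hSmeas j)).mpr (ae_of_all _ hpt)
  -- sum over blocks
  have hne : ENNReal.ofReal (((10:ℝ)^(m+1)*25)⁻¹) ≠ 0 := by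
    rw [← ENNReal.ofReal_zero, Ne, ENNReal.ofReal_eq_ofReal_iff (by positivity) le_rfl]
    positivity
  have htop : (⊤ : ℝ≥0∞) ≤ ∫⁻ p, F p := by
    calc (⊤ : ℝ≥0∞) = ∑' (_ : ℕ), ENNReal.ofReal (((10:ℝ)^(m+1)*25)⁻¹) :=
          (ENNReal.tsum_const_eq_top_of_ne_zero hne).symm
      _ ≤ ∑' j, ∫⁻ p in S j, F p := ENNReal.tsum_le_tsum hblock
      _ = ∫⁻ p in ⋃ j, S j, F p := (lintegral_iUnion hSmeas hdisj _).symm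
      _ ≤ ∫⁻ p, F p := setLIntegral_le_lintegral _ _
  exact top_le_iff.mp htop

end AuxRestriction
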